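/- Let A be symmetric positive definite and B satisfy ‖B‖ < λ_min(A). Then writing (A+B)⁻¹ = (I+G)A⁻¹, the matrix G satisfies ‖G‖_op ≤ (λ_min(A)/‖B‖ - 1)⁻¹. -/

import Mathlib

open Matrix

private lemma inner_clm_eq {n : ℕ} (M : Matrix (Fin n) (Fin n) ℝ) (x : EuclideanSpace ℝ (Fin n)) :
    inner ℝ x (Matrix.toEuclideanCLM (𝕜 := ℝ) M x) =
      star (WithLp.equiv 2 _ x) ⬝ᵥ M *ᵥ (WithLp.equiv 2 _ x) := by
  simp [EuclideanSpace.inner_eq_star_dotProduct, dotProduct, Matrix.mulVec]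
  exact Finset.sum_congr rfl fun _ _ => mul_comm _ _

private lemma sub_inf_psd {n : ℕ} [Nonempty (Fin n)] {A : Matrix (Fin n) (Fin n) ℝ}
    (hA : A.IsHermitian) : (A - (⨅ i, hA.eigenvalues i) • 1).PosSemidef := by
  set c := ⨅ i, hA.eigenvalues i with hc
  have hU : (hA.eigenvectorUnitary : Matrix (Fin n) (Fin n) ℝ) *
      star (hA.eigenvectorUnitary : Matrix (Fin n) (Fin n) ℝ) = 1 :=
    Matrix.mem_unitaryGroup_iff.mp hA.eigenvectorUnitary.2
  have h1 : A - c • 1 = (hA.eigenvectorUnitary : Matrix (Fin n) (Fin n) ℝ) *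
      diagonal (fun i => hA.eigenvalues i - c) *
      star (hA.eigenvectorUnitary : Matrix (Fin n) (Fin n) ℝ) := by
    have hd : diagonal (fun i => hA.eigenvalues i - c) =
        diagonal (RCLike.ofReal ∘ hA.eigenvalues) - c • (1 : Matrix (Fin n) (Fin n) ℝ) := by
      rw [Matrix.smul_one_eq_diagonal, ← Matrix.diagonal_sub]
      rfl
    rw [hd, Matrix.mul_sub, Matrix.sub_mul, ← Unitary.conjStarAlgAut_apply (S := ℝ), ← hA.spectral_theorem]
    congr 1
    rw [Matrix.mul_smul, Matrix.smul_mul, mul_one, hU]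
  rw [h1, Matrix.star_eq_conjTranspose]
  refine (Matrix.PosSemidef.diagonal fun i => ?_).mul_mul_conjTranspose_same _
  have hle : c ≤ hA.eigenvalues i := ciInf_le (Finite.bddBelow_range hA.eigenvalues) i
  simpa [sub_nonneg] using hle

private lemma lower_bound {n : ℕ} [Nonempty (Fin n)] {A : Matrix (Fin n) (Fin n) ℝ}
    (hA : A.PosDef) (x : EuclideanSpace ℝ (Fin n)) :
    (⨅ i, hA.1.eigenvalues i) * ‖x‖ ≤ ‖Matrix.toEuclideanCLM (𝕜 := ℝ) A x‖ := by
  set c := ⨅ i, hA.1.eigenvalues i with hc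
  have hpsd : (A - c • 1).PosSemidef := sub_inf_psd hA.1
  have h0 := hpsd.dotProduct_mulVec_nonneg (WithLp.equiv 2 _ x)
  have hinner : c * (‖x‖ * ‖x‖) ≤ inner ℝ x (Matrix.toEuclideanCLM (𝕜 := ℝ) A x) := by
    have hx : (inner ℝ x x : ℝ) = ‖x‖ * ‖x‖ := real_inner_self_eq_norm_mul_norm x
    have := inner_clm_eq (A - c • 1) x
    rw [map_sub, _root_.map_smul, _root_.map_one] at this
    simp only [ContinuousLinearMap.sub_apply, ContinuousLinearMap.smul_apply,
      ContinuousLinearMap.one_apply, inner_sub_right, inner_smul_right] at this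
    rw [hx] at this
    linarith [h0.trans_eq this.symm]
  have hcs := real_inner_le_norm x (Matrix.toEuclideanCLM (𝕜 := ℝ) A x)
  rcases eq_or_lt_of_le (norm_nonneg x) with h | h
  · simp [← h]
  · have : c * (‖x‖ * ‖x‖) ≤ ‖x‖ * ‖Matrix.toEuclideanCLM (𝕜 := ℝ) A x‖ := hinner.trans hcs
    nlinarith

/-- The minimum eigenvalue of a Hermitian real matrix. -/
noncomputable def lamMin {n : ℕ} {A : Matrix (Fin n) (Fin n) ℝ}
    (hA : A.IsHermitian) : ℝ :=
  ⨅ i, hA.eigenvalues i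

/-- The spectral (ℓ²-operator) norm of a real square matrix. -/
noncomputable def spec {n : ℕ} (A : Matrix (Fin n) (Fin n) ℝ) : ℝ :=
  ‖Matrix.toEuclideanCLM (𝕜 := ℝ) A‖

theorem stmt_5 {n : ℕ} (A B : Matrix (Fin n) (Fin n) ℝ) (hA : A.PosDef)
    (hBne : B ≠ 0) (hB : spec B < lamMin hA.1)
    (G : Matrix (Fin n) (Fin n) ℝ) (hG : (A + B)⁻¹ = (1 + G) * A⁻¹) :
    spec G ≤ (lamMin hA.1 / spec B - 1)⁻¹ := by
  have hne : Nonempty (Fin n) := by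
    rcases Nat.eq_zero_or_pos n with h | h
    · subst h
      exact absurd (by ext i j; exact i.elim0) hBne
    · exact Fin.pos_iff_nonempty.mp h
  set f := Matrix.toEuclideanCLM (𝕜 := ℝ) (n := Fin n) with hf
  set c := lamMin hA.1 with hc
  set s := spec B with hs
  -- spec B > 0
  have hspos : 0 < s := by
    have : f B ≠ 0 := fun h => hBne (Matrix.toEuclideanCLM.injective (by simpa using h))
    exact norm_pos_iff.mpr this
  have hε : 0 < c - s := sub_pos.mpr hB
  -- lower bound for A + B
  have hlow : ∀ x : EuclideanSpace ℝ (Fin n), (c - s) * ‖x‖ ≤ ‖f (A + B) x‖ := by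
    intro x
    have h1 : c * ‖x‖ ≤ ‖f A x‖ := lower_bound hA x
    have h2 : ‖f B x‖ ≤ s * ‖x‖ := (f B).le_opNorm x
    have h3 : ‖f A x‖ ≤ ‖f A x + f B x‖ + ‖f B x‖ := by
      simpa using norm_add_le (f A x + f B x) (-(f B x))
    have h4 : f (A + B) x = f A x + f B x := by rw [map_add]; rfl
    rw [h4]; nlinarith
  -- A + B is invertible
  have hABunit : IsUnit (A + B) := by
    rw [← Matrix.mulVec_injective_iff_isUnit]
    intro v w hvw
    have hx : f (A + B) ((WithLp.equiv 2 _).symm v) = f (A + B) ((WithLp.equiv 2 _).symm w) := by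
      rw [hf, WithLp.equiv_symm_apply, Matrix.toEuclideanCLM_toLp, Matrix.toEuclideanCLM_toLp]
      rw [hvw]
    have := hlow ((WithLp.equiv 2 _).symm v - (WithLp.equiv 2 _).symm w)
    rw [map_sub, hx, sub_self, norm_zero] at this
    have hnz : ‖(WithLp.equiv 2 ((Fin n) → ℝ)).symm v - (WithLp.equiv 2 _).symm w‖ = 0 := by
      nlinarith [norm_nonneg ((WithLp.equiv 2 ((Fin n) → ℝ)).symm v - (WithLp.equiv 2 _).symm w)]
    have := sub_eq_zero.mp (norm_eq_zero.mp hnz)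
    simpa using congrArg (WithLp.equiv 2 _) this
  have hABdet : IsUnit (A + B).det := (Matrix.isUnit_iff_isUnit_det _).mp hABunit
  have hAdet : IsUnit A.det := isUnit_iff_ne_zero.mpr hA.det_pos.ne'
  -- G = -( (A+B)⁻¹ * B )
  have hGeq : G = -((A + B)⁻¹ * B) := by
    have h1 : (A + B)⁻¹ * A = 1 + G := by
      rw [hG, mul_assoc, Matrix.nonsing_inv_mul A hAdet, mul_one]
    have h2 : (A + B)⁻¹ * (A + B) = 1 := Matrix.nonsing_inv_mul _ hABdet
    have := congrArg₂ (· - ·) h1 h2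
    simp only [← Matrix.mul_sub] at this
    rw [sub_add_cancel_left] at this  -- A - (A+B) = -B
    calc G = (1 + G) - 1 := by rw [add_sub_cancel_left]
    _ = -((A + B)⁻¹ * B) := by rw [← this]; simp [Matrix.mul_neg]
  -- bound spec (A+B)⁻¹
  have hinv : spec ((A + B)⁻¹) ≤ (c - s)⁻¹ := by
    apply ContinuousLinearMap.opNorm_le_bound _ (by positivity)
    intro y
    have happ : f (A + B) (f ((A + B)⁻¹) y) = y := by
      have : f (A + B) * f ((A + B)⁻¹) = 1 := by
        rw [← _root_.map_mul, Matrix.mul_nonsing_inv _ hABdet, _root_.map_one]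
      calc f (A + B) (f ((A + B)⁻¹) y) = (f (A + B) * f ((A + B)⁻¹)) y := rfl
      _ = y := by rw [this]; rfl
    have := hlow (f ((A + B)⁻¹) y)
    rw [happ] at this
    rw [inv_mul_eq_div, le_div_iff₀ hε]
    linarith
  -- final
  have hfinal : spec G ≤ (c - s)⁻¹ * s := by
    rw [hGeq]
    have h1 : spec (-((A + B)⁻¹ * B)) = spec ((A + B)⁻¹ * B) := by
      unfold spec; rw [map_neg, norm_neg]
    rw [h1]
    have h2 : spec ((A + B)⁻¹ * B) ≤ spec ((A + B)⁻¹) * spec B := by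
      unfold spec; rw [_root_.map_mul]; exact norm_mul_le _ _
    calc spec ((A + B)⁻¹ * B) ≤ spec ((A + B)⁻¹) * spec B := h2
    _ ≤ (c - s)⁻¹ * s := by
        apply mul_le_mul_of_nonneg_right hinv hspos.le
  have heq : (c / s - 1)⁻¹ = (c - s)⁻¹ * s := by
    rw [div_sub_one hspos.ne', inv_div, div_eq_mul_inv, mul_comm]
  rw [heq]
  exact hfinal
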